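/- Let ρ₁, ρ₂: Γ → Homeo⁺(S¹) be minimal circle actions. If ρ₁ is left-semi-conjugate to ρ₂ via a non-decreasing degree one map φ, then φ is a homeomorphism, and hence ρ₁ and ρ₂ are conjugate. -/

import Mathlib

noncomputable section

/-- The circle `S¹ = ℝ/ℤ`. -/
abbrev Circle1 : Type := AddCircle (1 : ℝ)

/-- `φt : ℝ → ℝ` is a good lift of `φ : S¹ → S¹`. -/
def GoodLift (φ : Circle1 → Circle1) (φt : ℝ → ℝ) : Prop :=
  (∀ x : ℝ, φ (↑x) = ↑(φt x)) ∧ Monotone φt ∧ ∀ x : ℝ, φt (x + 1) = φt x + 1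

/-- A non-decreasing degree one map of the circle is a map admitting a good lift. -/
def IsNonDecDegreeOne (φ : Circle1 → Circle1) : Prop :=
  ∃ φt : ℝ → ℝ, GoodLift φ φt

/-- An orientation-preserving homeomorphism of the circle: a map admitting a strictly
increasing surjective lift `ℝ → ℝ` commuting with the translation `x ↦ x + 1`. -/
def IsOPH (f : Circle1 → Circle1) : Prop :=
  ∃ ft : ℝ → ℝ, (∀ x : ℝ, f (↑x) = ↑(ft x)) ∧ StrictMono ft ∧
    Function.Surjective ft ∧ ∀ x : ℝ, ft (x + 1) = ft x + 1

/-- A circle action of a group `Γ`: a homomorphism `Γ → Homeo⁺(S¹)`. -/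
def IsCircleAction {Γ : Type*} [Group Γ] (ρ : Γ → Circle1 → Circle1) : Prop :=
  (∀ γ, IsOPH (ρ γ)) ∧ ρ 1 = id ∧ ∀ g h : Γ, ρ (g * h) = ρ g ∘ ρ h

/-- `ρ₁` is left-semi-conjugate to `ρ₂`: there is a non-decreasing degree one map `φ`
with `ρ₁(γ) ∘ φ = φ ∘ ρ₂(γ)` for all `γ`. -/
def LeftSemiconj {Γ : Type*} [Group Γ] (ρ₁ ρ₂ : Γ → Circle1 → Circle1) : Prop :=
  ∃ φ : Circle1 → Circle1, IsNonDecDegreeOne φ ∧ ∀ γ : Γ, ρ₁ γ ∘ φ = φ ∘ ρ₂ γ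

/-- `ρ₁` and `ρ₂` are semi-conjugate: `ρ₁` is both left- and right-semi-conjugate to `ρ₂`. -/
def Semiconj {Γ : Type*} [Group Γ] (ρ₁ ρ₂ : Γ → Circle1 → Circle1) : Prop :=
  LeftSemiconj ρ₁ ρ₂ ∧ LeftSemiconj ρ₂ ρ₁

/-- A circle action is minimal if every orbit is dense. -/
def IsMinimalAction {Γ : Type*} [Group Γ] (ρ : Γ → Circle1 → Circle1) : Prop :=
  ∀ x : Circle1, Dense (Set.range fun γ : Γ => ρ γ x)

open Set Function Filter

section Aux

/-- mk as named map -/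
abbrev cmk : ℝ → Circle1 := fun x => (x : Circle1)

lemma cmk_isOpenMap : IsOpenMap cmk := QuotientAddGroup.isOpenMap_coe

lemma cmk_eq_iff {x y : ℝ} : cmk x = cmk y ↔ ∃ k : ℤ, y = x + k := by
  rw [show cmk x = cmk y ↔ (x : Circle1) = y from Iff.rfl]
  rw [QuotientAddGroup.eq_iff_sub_mem]
  constructor
  · rintro h
    rcases AddSubgroup.mem_zmultiples_iff.mp h with ⟨k, hk⟩
    have hk' : (k:ℝ) = x - y := by rw [zsmul_eq_mul, mul_one] at hk; exact hk
    exact ⟨-k, by push_cast; linarith⟩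
  · rintro ⟨k, rfl⟩
    refine AddSubgroup.mem_zmultiples_iff.mpr ⟨-k, ?_⟩
    rw [zsmul_eq_mul, mul_one]; push_cast; ring

lemma circle_nontrivial : ((1/2 : ℝ) : Circle1) ≠ ((0 : ℝ) : Circle1) := by
  rw [show ((0:ℝ) : Circle1) = 0 by norm_cast]
  simp only [ne_eq, AddCircle.coe_eq_zero_iff]
  rintro ⟨n, hn⟩
  have : (n : ℝ) = 1/2 := by simpa using hn
  have h2 : ((2*n : ℤ) : ℝ) = (1 : ℝ) := by push_cast; linarith
  have : (2*n : ℤ) = 1 := by exact_mod_cast h2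
  omega

/-- lift translation by integers -/
lemma lift_zsmul {f : ℝ → ℝ} (hf : ∀ x, f (x + 1) = f x + 1) (x : ℝ) (n : ℤ) :
    f (x + n) = f x + n := by
  induction n using Int.induction_on with
  | zero => simp
  | succ k ih => push_cast; rw [show x + ((k:ℝ)+1) = (x + k) + 1 by ring, hf]; push_cast at ih; rw [ih]; ring
  | pred k ih =>
      push_cast at ih ⊢
      have := hf (x + (-(k:ℝ) - 1))
      rw [show x + (-(k:ℝ) - 1) + 1 = x + -(k:ℝ) by ring] at this
      linarith [ih, this]

/-- a circle map with a monotone lift whose range is dense is continuous with continuous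
surjective lift. -/
lemma cont_of_dense {φ : Circle1 → Circle1} {φt : ℝ → ℝ} (hg : GoodLift φ φt)
    (hd : Dense (Set.range φ)) : Continuous φ ∧ Continuous φt ∧ Surjective φt := by
  obtain ⟨hlift, hmono, hper⟩ := hg
  -- density of range φt
  have hsub : cmk ⁻¹' (Set.range φ) ⊆ Set.range φt := by
    rintro y ⟨p, hp⟩
    obtain ⟨x, rfl⟩ := QuotientAddGroup.mk_surjective p
    have : cmk (φt x) = cmk y := by rw [hlift x] at hp; exact hp
    rcases cmk_eq_iff.mp this with ⟨k, rfl⟩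
    exact ⟨x + k, lift_zsmul hper x k⟩
  have hdt : DenseRange φt := (hd.preimage cmk_isOpenMap).mono hsub
  have hcont : Continuous φt := hmono.continuous_of_denseRange hdt
  have htop : Tendsto φt atTop atTop := by
    refine tendsto_atTop_atTop_of_monotone hmono (fun b => ⟨(⌈b - φt 0⌉ : ℤ), ?_⟩)
    have h := lift_zsmul hper 0 ⌈b - φt 0⌉
    rw [zero_add] at h
    rw [h]
    linarith [Int.le_ceil (b - φt 0)]
  have hbot : Tendsto φt atBot atBot := by
    refine tendsto_atBot_atBot_of_monotone hmono (fun b => ⟨(⌊b - φt 0⌋ : ℤ), ?_⟩)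
    have h := lift_zsmul hper 0 ⌊b - φt 0⌋
    rw [zero_add] at h
    rw [h]
    linarith [Int.floor_le (b - φt 0)]
  have hsurj : Surjective φt := hcont.surjective htop hbot
  refine ⟨?_, hcont, hsurj⟩
  refine continuous_coinduced_dom.mpr ?_
  have hc2 : Continuous (cmk ∘ φt) := continuous_coinduced_rng.comp hcont
  convert hc2 using 1
  funext x
  exact hlift x

/-- each element of a circle action is continuous -/
lemma action_continuous {f : Circle1 → Circle1} (hf : IsOPH f) : Continuous f := by
  obtain ⟨ft, hlift, hsm, hsurj, hper⟩ := hf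
  have hcont : Continuous ft := hsm.monotone.continuous_of_denseRange hsurj.denseRange
  refine continuous_coinduced_dom.mpr ?_
  have hc2 : Continuous (cmk ∘ ft) := continuous_coinduced_rng.comp hcont
  convert hc2 using 1
  funext x
  exact hlift x

end Aux

theorem minimal_semiconj_is_conj {Γ : Type*} [Group Γ]
    (ρ₁ ρ₂ : Γ → Circle1 → Circle1)
    (h₁ : IsCircleAction ρ₁) (h₂ : IsCircleAction ρ₂)
    (hmin₁ : IsMinimalAction ρ₁) (hmin₂ : IsMinimalAction ρ₂)
    (φ : Circle1 → Circle1) (hφ : IsNonDecDegreeOne φ)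
    (hsc : ∀ γ : Γ, ρ₁ γ ∘ φ = φ ∘ ρ₂ γ) :
    ∃ ψ : Circle1 ≃ₜ Circle1, ⇑ψ = φ ∧
      ∀ γ : Γ, ρ₁ γ = ⇑ψ ∘ ρ₂ γ ∘ ⇑ψ.symm := by
  haveI : Fact ((0:ℝ) < 1) := ⟨zero_lt_one⟩
  obtain ⟨φt, hg⟩ := hφ
  obtain ⟨hlift, hmono, hper⟩ := hg
  have hsc' : ∀ γ p, ρ₁ γ (φ p) = φ (ρ₂ γ p) := fun γ p => congrFun (hsc γ) p
  -- inverses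
  have hinv₂ : ∀ γ p, ρ₂ γ⁻¹ (ρ₂ γ p) = p := by
    intro γ p
    have := congrFun (h₂.2.2 γ⁻¹ γ).symm p
    simpa [h₂.2.1] using this
  have hinv₂' : ∀ γ p, ρ₂ γ (ρ₂ γ⁻¹ p) = p := by
    intro γ p
    have := congrFun (h₂.2.2 γ γ⁻¹).symm p
    simpa [h₂.2.1] using this
  -- density of range φ
  have hdense : Dense (Set.range φ) := by
    refine Dense.mono ?_ (hmin₁ (φ ((0:ℝ) : Circle1)))
    rintro _ ⟨γ, rfl⟩
    exact ⟨ρ₂ γ ((0:ℝ) : Circle1), (hsc' γ _).symm⟩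
  obtain ⟨hcont, hcontt, hsurjt⟩ := cont_of_dense ⟨hlift, hmono, hper⟩ hdense
  -- the locally-collapsed set U is empty
  set U : Set Circle1 := {p | ∃ V : Set Circle1, IsOpen V ∧ p ∈ V ∧ ∀ q ∈ V, φ q = φ p}
    with hU
  have hUopen : IsOpen U := by
    rw [isOpen_iff_mem_nhds]
    rintro p ⟨V, hV, hpV, hVc⟩
    refine Filter.mem_of_superset (hV.mem_nhds hpV) ?_
    intro q hq
    exact ⟨V, hV, hq, fun r hr => (hVc r hr).trans (hVc q hq).symm⟩
  have hUinv : ∀ γ : Γ, ∀ q ∈ U, ρ₂ γ q ∈ U := by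
    rintro γ q ⟨V, hV, hqV, hVc⟩
    refine ⟨(ρ₂ γ⁻¹) ⁻¹' V, (action_continuous (h₂.1 γ⁻¹)).isOpen_preimage V hV, ?_, ?_⟩
    · simpa [hinv₂ γ q] using hqV
    · intro r hr
      have hrr : r = ρ₂ γ (ρ₂ γ⁻¹ r) := (hinv₂' γ r).symm
      calc φ r = φ (ρ₂ γ (ρ₂ γ⁻¹ r)) := by rw [← hrr]
        _ = ρ₁ γ (φ (ρ₂ γ⁻¹ r)) := (hsc' γ _).symm
        _ = ρ₁ γ (φ q) := by rw [hVc _ hr]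
        _ = φ (ρ₂ γ q) := hsc' γ q
  have hUempty : U = ∅ := by
    by_contra hne
    rcases Set.eq_empty_or_nonempty Uᶜ with hc | hc
    · -- U = univ : φ locally constant, hence constant, contradicting density
      have hUuniv : U = univ := by
        rw [← compl_compl U, hc, compl_empty]
      have hlc : IsLocallyConstant φ := by
        rw [IsLocallyConstant.iff_exists_open]
        intro x
        have hx : x ∈ U := hUuniv ▸ mem_univ x
        exact hx
      have hconst : ∀ p : Circle1, φ p = φ ((0:ℝ) : Circle1) := by
        intro p
        exact hlc.apply_eq_of_isPreconnected
          (isPreconnected_univ) (mem_univ p) (mem_univ _)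
      have : Set.range φ ⊆ {φ ((0:ℝ) : Circle1)} := by
        rintro _ ⟨p, rfl⟩; exact hconst p
      have hdense' : Dense ({φ ((0:ℝ) : Circle1)} : Set Circle1) := hdense.mono this
      have : (closure {φ ((0:ℝ) : Circle1)} : Set Circle1) = {φ ((0:ℝ) : Circle1)} :=
        closure_singleton
      have huniv : ({φ ((0:ℝ) : Circle1)} : Set Circle1) = univ := by
        rw [← this]; exact hdense'.closure_eq
      have h12 : ((1/2 : ℝ) : Circle1) ∈ ({φ ((0:ℝ) : Circle1)} : Set Circle1) :=
        huniv ▸ mem_univ _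
      have h0 : ((0 : ℝ) : Circle1) ∈ ({φ ((0:ℝ) : Circle1)} : Set Circle1) :=
        huniv ▸ mem_univ _
      exact circle_nontrivial (h12.trans h0.symm)
    · obtain ⟨x₀, hx₀⟩ := hc
      have horb : Set.range (fun γ : Γ => ρ₂ γ x₀) ⊆ Uᶜ := by
        rintro _ ⟨γ, rfl⟩
        intro hmem
        apply hx₀
        have := hUinv γ⁻¹ _ hmem
        rwa [hinv₂ γ x₀] at this
      have : Uᶜ = univ := by
        have h1 : closure (Set.range fun γ : Γ => ρ₂ γ x₀) = univ := (hmin₂ x₀).closure_eq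
        have h2 : closure (Set.range fun γ : Γ => ρ₂ γ x₀) ⊆ Uᶜ :=
          closure_minimal horb hUopen.isClosed_compl
        exact eq_univ_of_univ_subset (h1 ▸ h2)
      rw [Set.compl_univ_iff] at this
      exact hne this
  -- injectivity
  have hinj : Function.Injective φ := by
    intro a b hab
    by_contra hne
    obtain ⟨x, rfl⟩ := Quotient.exists_rep a
    have hx : (Quotient.mk _ x : Circle1) = (x : Circle1) := rfl
    obtain ⟨y₀, rfl⟩ := Quotient.exists_rep b
    set y := toIcoMod (zero_lt_one) x y₀ with hy
    have hyb : (Quotient.mk _ y₀ : Circle1) = (y : Circle1) := by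
      have h := toIcoMod_sub_self (zero_lt_one) x y₀
      rw [eq_comm]
      show (y : Circle1) = (y₀ : Circle1)
      rw [QuotientAddGroup.eq_iff_sub_mem, h]
      exact AddSubgroup.mem_zmultiples_iff.mpr ⟨-(toIcoDiv zero_lt_one x y₀), by push_cast; simp [neg_zsmul]⟩
    have hymem := toIcoMod_mem_Ico (zero_lt_one) x y₀
    rw [hx, hyb] at hab hne
    have hxy : x < y := hymem.1.lt_of_ne (fun h => hne (by rw [h]))
    have hylt : y < x + 1 := hymem.2
    -- φt y = φt x + k with k ∈ {0, 1}
    have : cmk (φt x) = cmk (φt y) := by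
      have h := hab; rw [hlift x, hlift y] at h; exact h
    rcases cmk_eq_iff.mp this with ⟨k, hk⟩
    have hk0 : (0:ℝ) ≤ k := by
      have := hmono hxy.le; linarith [hk ▸ this]
    have hk1 : (k:ℝ) ≤ 1 := by
      have h1 := hmono hylt.le
      rw [hper] at h1
      linarith [hk ▸ h1]
    have hk01 : k = 0 ∨ k = 1 := by
      have h0 : (0:ℤ) ≤ k := by exact_mod_cast hk0
      have h1 : k ≤ (1:ℤ) := by exact_mod_cast hk1
      omega
    -- get nondegenerate interval [u,v] on which φt is constant
    obtain ⟨u, v, huv, hflat⟩ : ∃ u v : ℝ, u < v ∧ φt v = φt u := by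
      rcases hk01 with rfl | rfl
      · exact ⟨x, y, hxy, by rw [hk]; push_cast; ring⟩
      · refine ⟨y, x + 1, hylt, ?_⟩
        rw [hper, hk]; push_cast; ring
    have hflat' : ∀ t ∈ Icc u v, φt t = φt u := by
      intro t ht
      exact le_antisymm (hflat ▸ hmono ht.2) (hmono ht.1)
    -- midpoint is in U: contradiction
    have hmid : cmk ((u+v)/2) ∈ U := by
      refine ⟨cmk '' Ioo u v, cmk_isOpenMap _ isOpen_Ioo, ⟨(u+v)/2, ⟨by linarith, by linarith⟩, rfl⟩, ?_⟩
      rintro _ ⟨t, ht, rfl⟩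
      show φ (cmk t) = φ (cmk ((u+v)/2))
      rw [show φ (cmk t) = cmk (φt t) from hlift t,
          show φ (cmk ((u+v)/2)) = cmk (φt ((u+v)/2)) from hlift _]
      rw [hflat' t ⟨ht.1.le, ht.2.le⟩, hflat' ((u+v)/2) ⟨by linarith [ht.1, ht.2], by linarith [ht.1, ht.2]⟩]
    rw [hUempty] at hmid
    exact hmid
  -- surjectivity
  have hsurj : Function.Surjective φ := by
    intro q
    obtain ⟨y, rfl⟩ := Quotient.exists_rep q
    obtain ⟨x, hx⟩ := hsurjt y
    exact ⟨(x : Circle1), by rw [hlift, hx]⟩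
  -- assemble homeomorphism
  let e : Circle1 ≃ Circle1 := Equiv.ofBijective φ ⟨hinj, hsurj⟩
  have hce : Continuous ⇑e := hcont
  let ψ : Circle1 ≃ₜ Circle1 := hce.homeoOfEquivCompactToT2
  refine ⟨ψ, rfl, ?_⟩
  intro γ
  funext p
  have hφsymm : φ (ψ.symm p) = p := e.apply_symm_apply p
  show ρ₁ γ p = φ (ρ₂ γ (ψ.symm p))
  rw [← hsc' γ (ψ.symm p), hφsymm]
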